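/- Let α > 1, d ≥ 1 an integer, and k = ⌊√(1/(α−1))⌋. Then d·α^((k+1)/d) ≥ α^k + d − 1. -/
import Mathlib


theorem stmt_1 (α : ℝ) (hα : 1 < α) (d : ℕ) (hd : 1 ≤ d)
    (k : ℕ) (hk : k = ⌊Real.sqrt (1 / (α - 1))⌋₊) :
    (d : ℝ) * α ^ (((k : ℝ) + 1) / (d : ℝ)) ≥ α ^ k + (d : ℝ) - 1 := by
  have hα0 : (0:ℝ) < α := lt_trans one_pos hα
  have hd0 : (0:ℝ) < d := by exact_mod_cast hd
  set u : ℝ := Real.log α with hu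
  have hu0 : 0 < u := Real.log_pos hα
  -- k² * u ≤ 1
  have hinv : (0:ℝ) ≤ 1 / (α - 1) := by
    apply div_nonneg zero_le_one; linarith
  have hkle : (k:ℝ) ≤ Real.sqrt (1 / (α - 1)) := by
    rw [hk]; exact Nat.floor_le (Real.sqrt_nonneg _)
  have hk2 : (k:ℝ)^2 ≤ 1 / (α - 1) := by
    have := mul_self_le_mul_self (by positivity) hkle
    rwa [Real.mul_self_sqrt hinv, ← pow_two] at this
  have hk2' : (k:ℝ)^2 * (α - 1) ≤ 1 := by
    rw [div_eq_inv_mul] at hk2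
    rw [mul_one] at hk2
    calc (k:ℝ)^2 * (α - 1) ≤ (α - 1)⁻¹ * (α - 1) := by
          apply mul_le_mul_of_nonneg_right hk2 (by linarith)
      _ = 1 := inv_mul_cancel₀ (by linarith)
  have hule : u ≤ α - 1 := Real.log_le_sub_one_of_pos hα0
  have hk2u : (k:ℝ)^2 * u ≤ 1 :=
    le_trans (mul_le_mul_of_nonneg_left hule (by positivity)) hk2'
  -- bound on k*u
  have hku0 : 0 ≤ (k:ℝ) * u := by positivity
  have hku1 : (k:ℝ) * u ≤ 1 := by
    rcases Nat.eq_zero_or_pos k with h0 | h1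
    · simp [h0]
    · have hk1 : (1:ℝ) ≤ k := by exact_mod_cast h1
      nlinarith
  -- exp(k u) ≤ 1 + k u + (k u)^2
  have hexp : Real.exp ((k:ℝ) * u) ≤ 1 + (k:ℝ) * u + ((k:ℝ) * u)^2 := by
    have h := Real.abs_exp_sub_one_sub_id_le (x := (k:ℝ)*u) (by rw [abs_of_nonneg hku0]; exact hku1)
    have := (abs_le.mp h).2
    linarith
  -- α^k = exp(k u)
  have hak : α ^ k = Real.exp ((k:ℝ) * u) := by
    rw [mul_comm, Real.exp_mul, Real.exp_log hα0, Real.rpow_natCast]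
  -- lower bound on LHS
  have hrpow : α ^ (((k : ℝ) + 1) / (d : ℝ)) = Real.exp ((((k:ℝ)+1)/d) * u) := by
    rw [Real.rpow_def_of_pos hα0, mul_comm]
  have hlow : 1 + (((k:ℝ)+1)/d) * u ≤ α ^ (((k : ℝ) + 1) / (d : ℝ)) := by
    rw [hrpow]; linarith [Real.add_one_le_exp ((((k:ℝ)+1)/d) * u)]
  have hdlow : (d:ℝ) + ((k:ℝ)+1) * u ≤ (d : ℝ) * α ^ (((k : ℝ) + 1) / (d : ℝ)) := by
    have := mul_le_mul_of_nonneg_left hlow (le_of_lt hd0)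
    have hdiv : (d:ℝ) * ((((k:ℝ)+1)/d) * u) = ((k:ℝ)+1) * u := by
      field_simp
    nlinarith
  -- final: (k+1)u + d ≥ 1 + ku + (ku)^2 + d - 1  ⟺ u ≥ k²u²
  have hkey : (k:ℝ)^2 * u^2 ≤ u := by nlinarith
  rw [ge_iff_le, hak]
  nlinarith [hexp, hdlow]
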